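/- arXiv:1912.04401 — 2 statements merged into one kernel-verified Lean document; each statement's English description precedes it below -/
import Mathlib

section
/- Let A be an abelian group with a height function h : A → ℝ satisfying: (i) for each Q ∈ A there is a constant C₁ such that h(P+Q) ≤ 2h(P) + C₁ for all P ∈ A; (ii) there is an integer m ≥ 2 and a constant C₂ such that h(mP) ≥ m²h(P) − C₂ for all P ∈ A; (iii) for every constant C₃ the set {P ∈ A : h(P) ≤ C₃} is finite. If moreover A/mA is finite for the integer m in (ii), then A is finitely generated. -/
/-- **Descent theorem.** An abelian group with a height function satisfying the three
descent properties, and with finite quotient by `m`-multiples, is finitely generated. -/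
theorem descent_theorem (A : Type*) [AddCommGroup A] (h : A → ℝ) (m : ℤ) (hm : 2 ≤ m)
    (h1 : ∀ Q : A, ∃ C₁ : ℝ, ∀ P : A, h (P + Q) ≤ 2 * h P + C₁)
    (h2 : ∃ C₂ : ℝ, ∀ P : A, (m : ℝ) ^ 2 * h P - C₂ ≤ h (m • P))
    (h3 : ∀ C₃ : ℝ, {P : A | h P ≤ C₃}.Finite)
    (hfin : Finite (A ⧸ (AddMonoidHom.mk' (fun P : A => m • P)
      (fun P Q => smul_add m P Q)).range)) :
    AddGroup.FG A := by
  set H : AddSubgroup A := (AddMonoidHom.mk' (fun P : A => m • P)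
      (fun P Q => smul_add m P Q)).range with hH
  obtain ⟨C₂, hC₂⟩ := h2
  choose c hc using fun Q : A => h1 (-Q)
  set S : Set A := Set.range (fun q : A ⧸ H => q.out) with hS
  have hSfin : S.Finite := Set.finite_range _
  obtain ⟨C₁, hC₁⟩ := (hSfin.image c).bddAbove
  set C : ℝ := C₁ + C₂ with hCdef
  set K : ℝ := max C 2 with hKdef
  have hK2 : (2:ℝ) ≤ K := le_max_right _ _
  have hKC : C ≤ K := le_max_left _ _
  set T : Set A := S ∪ {P | h P ≤ K} with hT
  have hTfin : T.Finite := hSfin.union (h3 K)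
  have hmsq : (4:ℝ) ≤ (m:ℝ) ^ 2 := by
    have : (2:ℝ) ≤ (m:ℝ) := by exact_mod_cast hm
    nlinarith
  have key : ∀ n : ℕ, ∀ P : A, h P ≤ K + n → P ∈ AddSubgroup.closure T := by
    intro n
    induction n with
    | zero =>
      intro P hP
      exact AddSubgroup.subset_closure (Or.inr (by simpa using hP))
    | succ n ih =>
      intro P hP
      set Q : A := (QuotientAddGroup.mk P : A ⧸ H).out with hQ
      have hQS : Q ∈ S := ⟨_, rfl⟩
      have hmk : (QuotientAddGroup.mk Q : A ⧸ H) = QuotientAddGroup.mk P := by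
        exact QuotientAddGroup.out_eq' _
      have hmem : P - Q ∈ H := by
        rw [eq_comm, QuotientAddGroup.eq_iff_sub_mem] at hmk
        exact hmk
      obtain ⟨P₁, hP₁⟩ : ∃ P₁ : A, m • P₁ = P - Q := hmem
      have hcQ : c Q ≤ C₁ := hC₁ (Set.mem_image_of_mem c hQS)
      have hb : (m:ℝ) ^ 2 * h P₁ ≤ 2 * h P + C := by
        have h1' : h (P + -Q) ≤ 2 * h P + c Q := hc Q P
        have h2' : (m:ℝ) ^ 2 * h P₁ - C₂ ≤ h (m • P₁) := hC₂ P₁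
        rw [hP₁] at h2'
        rw [← sub_eq_add_neg] at h1'
        rw [hCdef]
        linarith
      have hstep : h P₁ ≤ K + n := by
        rcases le_or_gt (h P₁) 0 with h0 | h0
        · have : (0:ℝ) ≤ n := Nat.cast_nonneg n
          linarith
        · push_cast at hP ⊢
          nlinarith
      have hPmem : P₁ ∈ AddSubgroup.closure T := ih P₁ hstep
      have hQmem : Q ∈ AddSubgroup.closure T := AddSubgroup.subset_closure (Or.inl hQS)
      have : P = m • P₁ + Q := by rw [hP₁]; abel
      rw [this]
      exact add_mem (zsmul_mem hPmem m) hQmem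
  rw [AddGroup.fg_iff]
  refine ⟨T, ?_, hTfin⟩
  rw [eq_top_iff]
  intro P _
  exact key ⌈h P⌉₊ P (by have := Nat.le_ceil (h P); linarith)
end

section
/- Let A, B be integers with 4A³ + 27B² ≠ 0 and let a, b be coprime integers. Set F(a,b) = a⁴ − 2Aa²b² − 8Bab³ + A²b⁴ and G(a,b) = 4a³b + 4Aab³ + 4Bb⁴. Then gcd(F(a,b), G(a,b)) divides 4(4A³ + 27B²). -/
/-- If `a, b` are coprime integers, then the gcd of the values `F(a,b)` and `G(a,b)`
of the homogeneous quartics in the duplication formula for `y² = x³ + Ax + B`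
divides `4(4A³ + 27B²)`. -/
theorem gcd_duplication_divides (A B a b : ℤ) (hΔ : 4 * A ^ 3 + 27 * B ^ 2 ≠ 0)
    (hab : IsCoprime a b) :
    (Int.gcd (a ^ 4 - 2 * A * a ^ 2 * b ^ 2 - 8 * B * a * b ^ 3 + A ^ 2 * b ^ 4)
        (4 * a ^ 3 * b + 4 * A * a * b ^ 3 + 4 * B * b ^ 4) : ℤ) ∣
      4 * (4 * A ^ 3 + 27 * B ^ 2) := by
  set F : ℤ := a ^ 4 - 2 * A * a ^ 2 * b ^ 2 - 8 * B * a * b ^ 3 + A ^ 2 * b ^ 4 with hF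
  set G : ℤ := 4 * a ^ 3 * b + 4 * A * a * b ^ 3 + 4 * B * b ^ 4 with hG
  have hdF : (Int.gcd F G : ℤ) ∣ F := Int.gcd_dvd_left F G
  have hdG : (Int.gcd F G : ℤ) ∣ G := Int.gcd_dvd_right F G
  have h1 : (Int.gcd F G : ℤ) ∣ 4 * (4 * A ^ 3 + 27 * B ^ 2) * b ^ 7 := by
    have key : 4 * (4 * A ^ 3 + 27 * B ^ 2) * b ^ 7 =
        (12 * a ^ 2 * b + 16 * A * b ^ 3) * F +
        (-3 * a ^ 3 + 5 * A * a * b ^ 2 + 27 * B * b ^ 3) * G := by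
      rw [hF, hG]; ring
    rw [key]
    exact dvd_add (hdF.mul_left _) (hdG.mul_left _)
  have h2 : (Int.gcd F G : ℤ) ∣ 4 * (4 * A ^ 3 + 27 * B ^ 2) * a ^ 7 := by
    have key : 4 * (4 * A ^ 3 + 27 * B ^ 2) * a ^ 7 =
        ((16 * A ^ 3 + 108 * B ^ 2) * a ^ 3 - 4 * A ^ 2 * B * a ^ 2 * b +
          (12 * A ^ 4 + 88 * A * B ^ 2) * a * b ^ 2 +
          (12 * A ^ 3 * B + 96 * B ^ 3) * b ^ 3) * F +
        (A ^ 2 * B * a ^ 3 + (5 * A ^ 4 + 32 * A * B ^ 2) * a ^ 2 * b +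
          (26 * A ^ 3 * B + 192 * B ^ 3) * a * b ^ 2 +
          (-3 * A ^ 5 - 24 * A ^ 2 * B ^ 2) * b ^ 3) * G := by
      rw [hF, hG]; ring
    rw [key]
    exact dvd_add (hdF.mul_left _) (hdG.mul_left _)
  obtain ⟨u, v, huv⟩ := (hab.pow (m := 7) (n := 7))
  have key : 4 * (4 * A ^ 3 + 27 * B ^ 2) =
      u * (4 * (4 * A ^ 3 + 27 * B ^ 2) * a ^ 7) +
      v * (4 * (4 * A ^ 3 + 27 * B ^ 2) * b ^ 7) := by
    linear_combination 4 * (4 * A ^ 3 + 27 * B ^ 2) * huv.symm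
  rw [key]
  exact dvd_add (h2.mul_left u) (h1.mul_left v)
end
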